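/- Let m ≥ 1 and let n = 2m+1, let 0 < k < n, and let F be a pointwise-increasing family of k-element subsets of [n]. If Bob(F) holds, then both Bob(F_{m+1}^+) and Bob(F_{m+1}^-) hold; equivalently, Alice wins her F-game by opening with the middle element m+1. -/

import Mathlib

/-- The board `[n] = {1, …, n}` as a finite set of natural numbers. -/
def board (n : ℕ) : Finset ℕ := Finset.Icc 1 n

/-- The order-preserving relabelling of `[n] \ {x}` onto `[n-1]`:
elements below `x` are unchanged, elements above `x` drop by one. -/
def stdElt (x r : ℕ) : ℕ := if r < x then r else r - 1

/-- Standardise a set avoiding `x`: relabel it via `stdElt x`. -/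
def stdSet (x : ℕ) (S : Finset ℕ) : Finset ℕ := S.image (stdElt x)

/-- The standardised section `F_x^+ = { S \ {x} : x ∈ S ∈ F }`,
viewed as a family of subsets of `[n-1]`. -/
def secPlus (F : Set (Finset ℕ)) (x : ℕ) : Set (Finset ℕ) :=
  {T | ∃ S ∈ F, x ∈ S ∧ T = stdSet x (S.erase x)}

/-- The standardised section `F_x^- = { S ∈ F : x ∉ S }`,
viewed as a family of subsets of `[n-1]`. -/
def secMinus (F : Set (Finset ℕ)) (x : ℕ) : Set (Finset ℕ) :=
  {T | ∃ S ∈ F, x ∉ S ∧ T = stdSet x S}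

mutual
  /-- `AliceWins n k F`: Alice wins her `F`-game, where `F` is a family of
  `k`-subsets of `[n]`.  Terminal games (`k = 0` or `k = n`) are won iff `F`
  is nonempty; otherwise Alice needs a first offer `x` such that Bob wins both
  his `F_x^+`-game and his `F_x^-`-game. -/
  def AliceWins (n k : ℕ) (F : Set (Finset ℕ)) : Prop :=
    if h : k = 0 ∨ n ≤ k then F.Nonempty
    else ∃ x ∈ board n,
      BobWins (n - 1) (k - 1) (secPlus F x) ∧ BobWins (n - 1) k (secMinus F x)
  termination_by n
  decreasing_by all_goals omega

  /-- `BobWins n k F`: Bob wins his `F`-game, where `F` is a family of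
  `k`-subsets of `[n]`.  Terminal games (`k = 0` or `k = n`) are won iff `F`
  is nonempty; otherwise Bob needs, for every first offer `x`, that Alice wins
  her `F_x^+`-game or her `F_x^-`-game. -/
  def BobWins (n k : ℕ) (F : Set (Finset ℕ)) : Prop :=
    if h : k = 0 ∨ n ≤ k then F.Nonempty
    else ∀ x ∈ board n,
      AliceWins (n - 1) (k - 1) (secPlus F x) ∨ AliceWins (n - 1) k (secMinus F x)
  termination_by n
  decreasing_by all_goals omega
end

/-- `S ⪯ T` in the pointwise order: the increasing enumerations of `S` and `T`
have the same length and are pointwise `≤`. -/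
def PointwiseLE (S T : Finset ℕ) : Prop :=
  List.Forall₂ (· ≤ ·) (S.sort (· ≤ ·)) (T.sort (· ≤ ·))

/-- `F` consists of `k`-element subsets of `[n]`. -/
def IsFamilyOn (n k : ℕ) (F : Set (Finset ℕ)) : Prop :=
  ∀ S ∈ F, S ⊆ board n ∧ S.card = k

/-- `F` is pointwise-increasing as a family of `k`-subsets of `[n]`:
it is upwards closed in the pointwise order. -/
def IsIncreasingFamily (n k : ℕ) (F : Set (Finset ℕ)) : Prop :=
  ∀ S T : Finset ℕ, S ∈ F → T ⊆ board n → T.card = k → PointwiseLE S T → T ∈ F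

/-! ### Basic lemmas -/

def unstdElt (x r : ℕ) : ℕ := if r < x then r else r + 1

lemma stdElt_unstdElt (x b : ℕ) : stdElt x (unstdElt x b) = b := by
  simp only [stdElt, unstdElt]; split_ifs <;> omega

lemma unstdElt_stdElt {x r : ℕ} (h : r ≠ x) : unstdElt x (stdElt x r) = r := by
  simp only [stdElt, unstdElt]; split_ifs <;> omega

lemma unstdElt_ne (x b : ℕ) : unstdElt x b ≠ x := by
  simp only [unstdElt]; split_ifs <;> omega

lemma unstdElt_injective (x : ℕ) : Function.Injective (unstdElt x) := by
  intro a b h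
  have := stdElt_unstdElt x a
  have := stdElt_unstdElt x b
  rw [h] at *; omega

lemma mem_board {n r : ℕ} : r ∈ board n ↔ 1 ≤ r ∧ r ≤ n := by
  simp [board, Finset.mem_Icc]

lemma unstdElt_mem_board {n x b : ℕ} (hx : x ∈ board n) (hb : b ∈ board (n - 1)) :
    unstdElt x b ∈ board n := by
  rw [mem_board] at *; simp only [unstdElt]; split_ifs <;> omega

lemma mem_stdSet {x : ℕ} {A : Finset ℕ} (hA : x ∉ A) {b : ℕ} :
    b ∈ stdSet x A ↔ unstdElt x b ∈ A := by
  simp only [stdSet, Finset.mem_image]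
  constructor
  · rintro ⟨a, ha, rfl⟩
    rwa [unstdElt_stdElt (by rintro rfl; exact hA ha)]
  · intro h
    exact ⟨unstdElt x b, h, stdElt_unstdElt x b⟩

lemma stdSet_image_unstd {x : ℕ} {T : Finset ℕ} : stdSet x (T.image (unstdElt x)) = T := by
  ext b
  rw [mem_stdSet (by simp only [Finset.mem_image]; rintro ⟨a, _, h⟩; exact unstdElt_ne x a h)]
  constructor
  · intro h
    obtain ⟨a, ha, h⟩ := Finset.mem_image.1 h
    rwa [unstdElt_injective x h] at ha
  · intro h; exact Finset.mem_image_of_mem _ h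

lemma image_unstd_stdSet {x : ℕ} {A : Finset ℕ} (hA : x ∉ A) :
    (stdSet x A).image (unstdElt x) = A := by
  ext r
  simp only [Finset.mem_image]
  constructor
  · rintro ⟨b, hb, rfl⟩
    exact (mem_stdSet hA).1 hb
  · intro hr
    exact ⟨stdElt x r, Finset.mem_image_of_mem _ hr,
      unstdElt_stdElt (by rintro rfl; exact hA hr)⟩

lemma stdSet_eq_iff {x : ℕ} {A T : Finset ℕ} (hA : x ∉ A) :
    T = stdSet x A ↔ A = T.image (unstdElt x) := by
  constructor
  · rintro rfl; rw [image_unstd_stdSet hA]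
  · rintro rfl; rw [stdSet_image_unstd]

lemma stdSet_card {x : ℕ} {A : Finset ℕ} (hA : x ∉ A) : (stdSet x A).card = A.card := by
  conv_rhs => rw [← image_unstd_stdSet hA]
  rw [Finset.card_image_of_injective _ (unstdElt_injective x)]

lemma stdSet_subset_board {n x : ℕ} {A : Finset ℕ} (hA : A ⊆ board n) (hx : x ∈ board n)
    (hxA : x ∉ A) : stdSet x A ⊆ board (n - 1) := by
  intro b hb
  rw [mem_stdSet hxA] at hb
  have h1 := hA hb
  have h2 := unstdElt_ne x b
  rw [mem_board] at *
  simp only [unstdElt] at h1 h2 ⊢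
  split_ifs at h1 h2 <;> omega

lemma mem_stdSet_self {x y : ℕ} {A : Finset ℕ} (hA : x ∉ A) (hy : y ≠ x) :
    stdElt x y ∈ stdSet x A ↔ y ∈ A := by
  rw [mem_stdSet hA, unstdElt_stdElt hy]

lemma stdSet_erase {x y : ℕ} {A : Finset ℕ} (hA : x ∉ A) (hy : y ≠ x) :
    (stdSet x A).erase (stdElt x y) = stdSet x (A.erase y) := by
  ext b
  rw [Finset.mem_erase, mem_stdSet hA, mem_stdSet (fun h => hA (Finset.mem_of_mem_erase h)),
    Finset.mem_erase]
  constructor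
  · rintro ⟨hne, h⟩
    refine ⟨fun he => hne ?_, h⟩
    rw [← he, stdElt_unstdElt]
  · rintro ⟨hne, h⟩
    refine ⟨fun he => hne ?_, h⟩
    rw [he, unstdElt_stdElt hy]

/-! ### Counting characterisation of the pointwise order -/

def cnt (c : ℕ) (S : Finset ℕ) : ℕ := (S.filter (fun t => c ≤ t)).card

def CLE (S T : Finset ℕ) : Prop := ∀ c, cnt c S ≤ cnt c T

def CInc (n k : ℕ) (F : Set (Finset ℕ)) : Prop :=
  ∀ S T : Finset ℕ, S ∈ F → T ⊆ board n → T.card = k → S.card = T.card → CLE S T → T ∈ F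

lemma cnt_insert {x : ℕ} {A : Finset ℕ} (h : x ∉ A) (c : ℕ) :
    cnt c (insert x A) = cnt c A + if c ≤ x then 1 else 0 := by
  unfold cnt
  rw [Finset.filter_insert]
  split_ifs with h1
  · rw [Finset.card_insert_of_notMem (fun hh => h (Finset.mem_of_mem_filter _ hh))]
  · rfl

lemma cnt_erase {t : ℕ} {A : Finset ℕ} (h : t ∈ A) (c : ℕ) :
    cnt c (A.erase t) + (if c ≤ t then 1 else 0) = cnt c A := by
  conv_rhs => rw [← Finset.insert_erase h]
  rw [cnt_insert (Finset.notMem_erase _ _)]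

lemma cnt_anti {c d : ℕ} (h : c ≤ d) (A : Finset ℕ) : cnt d A ≤ cnt c A := by
  apply Finset.card_le_card
  intro a ha
  rw [Finset.mem_filter] at *
  exact ⟨ha.1, le_trans h ha.2⟩

lemma cnt_pred (c : ℕ) (A : Finset ℕ) : cnt (c - 1) A ≤ cnt c A + 1 := by
  rcases Nat.eq_zero_or_pos c with rfl | hc
  · simpa using cnt_anti (by omega) A
  have : A.filter (fun t => c - 1 ≤ t) ⊆ insert (c - 1) (A.filter (fun t => c ≤ t)) := by
    intro a ha
    rw [Finset.mem_filter] at ha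
    rcases Nat.lt_or_ge a c with h | h
    · rw [Finset.mem_insert]; left; omega
    · rw [Finset.mem_insert]; right; rw [Finset.mem_filter]; exact ⟨ha.1, h⟩
  calc cnt (c-1) A ≤ (insert (c-1) (A.filter (fun t => c ≤ t))).card := Finset.card_le_card this
    _ ≤ cnt c A + 1 := Finset.card_insert_le _ _

lemma cnt_image_unstd (x c : ℕ) (T : Finset ℕ) :
    cnt c (T.image (unstdElt x)) = cnt (if x < c then c - 1 else c) T := by
  unfold cnt
  rw [Finset.filter_image]
  rw [Finset.card_image_of_injective _ (unstdElt_injective x)]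
  congr 1
  apply Finset.filter_congr
  intro a _
  simp only [Function.comp, unstdElt, eq_iff_iff]
  split_ifs <;> omega

lemma cnt_singleton (c s : ℕ) : cnt c {s} = if c ≤ s then 1 else 0 := by
  unfold cnt
  rw [Finset.filter_singleton]
  split_ifs <;> simp

/-- Bridge: the counting order implies the sorted-pointwise order. -/
lemma pointwiseLE_of_cle {S T : Finset ℕ} (hcard : S.card = T.card) (h : CLE S T) :
    PointwiseLE S T := by
  unfold PointwiseLE
  have hlen : (S.sort (· ≤ ·)).length = (T.sort (· ≤ ·)).length := by
    rw [Finset.length_sort, Finset.length_sort, hcard]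
  -- counting on sorted lists
  have hcnt : ∀ (c : ℕ) (U : Finset ℕ), cnt c U = ((U.sort (· ≤ ·)).filter (fun t => c ≤ t)).length := by
    intro c U
    unfold cnt
    have h1 : (U.filter (fun t => c ≤ t)).card = ((U.val).filter (fun t => c ≤ t)).card := rfl
    rw [h1, ← Finset.sort_eq U (· ≤ ·)]
    rw [show ((Finset.sort U (· ≤ ·) : Multiset ℕ).filter (fun t => c ≤ t))
        = ((Finset.sort U (· ≤ ·)).filter (fun t => c ≤ t) : Multiset ℕ) from Multiset.filter_coe _ _]
    exact Multiset.coe_card _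
  rw [List.forall₂_iff_get]
  refine ⟨hlen, fun i h1 h2 => ?_⟩
  by_contra hlt
  push_neg at hlt
  set l₁ := S.sort (· ≤ ·) with hl₁
  set l₂ := T.sort (· ≤ ·) with hl₂
  set c := l₁.get ⟨i, h1⟩ with hc
  -- lower bound on cnt c S
  have hs₁ : l₁.Pairwise (· ≤ ·) := Finset.pairwise_sort _ _
  have hs₂ : l₂.Pairwise (· ≤ ·) := Finset.pairwise_sort _ _
  have hlow : l₁.length - i ≤ cnt c S := by
    rw [hcnt c S, ← hl₁]
    have : ∀ a ∈ l₁.drop i, c ≤ a := by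
      intro a ha
      obtain ⟨j, hj, rfl⟩ := List.mem_iff_getElem.1 ha
      rw [List.getElem_drop]
      have : c ≤ l₁.get ⟨i + j, by rw [List.length_drop] at hj; omega⟩ :=
        hs₁.rel_get_of_le (by simp)
      simpa using this
    calc l₁.length - i = (l₁.drop i).length := by rw [List.length_drop]
      _ = ((l₁.drop i).filter (fun t => c ≤ t)).length := by
          rw [List.filter_eq_self.2 (by intro a ha; simpa using this a ha)]
      _ ≤ (l₁.filter (fun t => c ≤ t)).length := by
          conv_rhs => rw [← List.take_append_drop i l₁]
          rw [List.filter_append, List.length_append]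
          omega
  have hhigh : cnt c T ≤ l₂.length - (i + 1) := by
    rw [hcnt c T, ← hl₂]
    have htake : ∀ a ∈ l₂.take (i + 1), ¬ (c ≤ a) := by
      intro a ha
      obtain ⟨j, hj, rfl⟩ := List.mem_iff_getElem.1 ha
      rw [List.getElem_take]
      have hji : j ≤ i := by
        rw [List.length_take] at hj
        omega
      have hjl : j < l₂.length := by omega
      have : l₂.get ⟨j, hjl⟩ ≤ l₂.get ⟨i, h2⟩ := hs₂.rel_get_of_le (by simp; omega)
      simp only [not_le]
      calc l₂[j] = l₂.get ⟨j, hjl⟩ := rfl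
        _ ≤ l₂.get ⟨i, h2⟩ := this
        _ < c := hlt
  
    conv_lhs => rw [← List.take_append_drop (i + 1) l₂]
    rw [List.filter_append, List.length_append]
    have h0 : (l₂.take (i+1)).filter (fun t => c ≤ t) = [] := by
      rw [List.filter_eq_nil_iff]
      intro a ha
      simpa using htake a ha
    rw [h0]
    simp only [List.length_nil, Nat.zero_add]
    calc ((l₂.drop (i+1)).filter _).length ≤ (l₂.drop (i+1)).length := List.length_filter_le _ _
      _ = l₂.length - (i+1) := List.length_drop
  have := h c
  have hi : i < l₁.length := h1
  omega

/-! ### Families and sections -/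

lemma mem_secMinus {F : Set (Finset ℕ)} {x : ℕ} {T : Finset ℕ} :
    T ∈ secMinus F x ↔ ∃ S ∈ F, x ∉ S ∧ T = stdSet x S := Iff.rfl

lemma mem_secPlus {F : Set (Finset ℕ)} {x : ℕ} {T : Finset ℕ} :
    T ∈ secPlus F x ↔ ∃ S ∈ F, x ∈ S ∧ T = stdSet x (S.erase x) := Iff.rfl

lemma secMinus_family {n k x : ℕ} {F : Set (Finset ℕ)} (hF : IsFamilyOn n k F)
    (hx : x ∈ board n) : IsFamilyOn (n - 1) k (secMinus F x) := by
  rintro T ⟨S, hS, hxS, rfl⟩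
  obtain ⟨hSb, hSc⟩ := hF S hS
  exact ⟨stdSet_subset_board hSb hx hxS, by rw [stdSet_card hxS, hSc]⟩

lemma secPlus_family {n k x : ℕ} {F : Set (Finset ℕ)} (hF : IsFamilyOn n k F)
    (hx : x ∈ board n) : IsFamilyOn (n - 1) (k - 1) (secPlus F x) := by
  rintro T ⟨S, hS, hxS, rfl⟩
  obtain ⟨hSb, hSc⟩ := hF S hS
  refine ⟨stdSet_subset_board (fun a ha => hSb (Finset.mem_of_mem_erase ha)) hx
    (Finset.notMem_erase _ _), ?_⟩
  rw [stdSet_card (Finset.notMem_erase _ _), Finset.card_erase_of_mem hxS, hSc]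

lemma cle_unstd_transfer {x : ℕ} {A T : Finset ℕ} (hxA : x ∉ A)
    (h : CLE (stdSet x A) T) : CLE A (T.image (unstdElt x)) := by
  intro c
  have h1 : A = (stdSet x A).image (unstdElt x) := (image_unstd_stdSet hxA).symm
  rw [h1, cnt_image_unstd, cnt_image_unstd]
  exact h _

lemma secMinus_cinc {n k x : ℕ} {F : Set (Finset ℕ)} (hF : IsFamilyOn n k F)
    (hC : CInc n k F) (hx : x ∈ board n) : CInc (n - 1) k (secMinus F x) := by
  rintro T T' ⟨S, hS, hxS, rfl⟩ hT'b hT'c hcard hcle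
  set U := T'.image (unstdElt x) with hU
  have hxU : x ∉ U := by
    simp only [hU, Finset.mem_image]
    rintro ⟨a, _, hh⟩
    exact unstdElt_ne x a hh
  have hUF : U ∈ F := by
    apply hC S U hS
    · intro r hr
      obtain ⟨b, hb, rfl⟩ := Finset.mem_image.1 hr
      exact unstdElt_mem_board hx (hT'b hb)
    · rw [hU, Finset.card_image_of_injective _ (unstdElt_injective x), hT'c]
    · rw [hU, Finset.card_image_of_injective _ (unstdElt_injective x), ← hcard,
        stdSet_card hxS]
    · exact cle_unstd_transfer hxS hcle
  exact ⟨U, hUF, hxU, ((stdSet_eq_iff hxU).2 hU.symm ▸ rfl : T' = stdSet x U)⟩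

lemma secPlus_cinc {n k x : ℕ} {F : Set (Finset ℕ)} (hF : IsFamilyOn n k F)
    (hC : CInc n k F) (hx : x ∈ board n) : CInc (n - 1) (k - 1) (secPlus F x) := by
  rintro T T' ⟨S, hS, hxS, rfl⟩ hT'b hT'c hcard hcle
  have hex : x ∉ S.erase x := Finset.notMem_erase _ _
  set U := insert x (T'.image (unstdElt x)) with hU
  have hxU' : x ∉ T'.image (unstdElt x) := by
    simp only [Finset.mem_image]
    rintro ⟨a, _, hh⟩
    exact unstdElt_ne x a hh
  have hUF : U ∈ F := by
    apply hC S U hS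
    · intro r hr
      rw [hU, Finset.mem_insert] at hr
      rcases hr with rfl | hr
      · exact hx
      obtain ⟨b, hb, rfl⟩ := Finset.mem_image.1 hr
      exact unstdElt_mem_board hx (hT'b hb)
    · rw [hU, Finset.card_insert_of_notMem hxU',
        Finset.card_image_of_injective _ (unstdElt_injective x), hT'c]
      have := (hF S hS).2
      have hk1 : 1 ≤ k := by
        rw [← this]
        exact Finset.card_pos.2 ⟨x, hxS⟩
      omega
    · rw [hU, Finset.card_insert_of_notMem hxU',
        Finset.card_image_of_injective _ (unstdElt_injective x), ← hcard,
        stdSet_card hex]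
      conv_lhs => rw [← Finset.insert_erase hxS]
      rw [Finset.card_insert_of_notMem hex]
    · -- CLE S U
      intro c
      conv_lhs => rw [← Finset.insert_erase hxS]
      rw [cnt_insert hex, cnt_insert hxU']
      have := cle_unstd_transfer hex hcle c
      omega
  refine ⟨U, hUF, Finset.mem_insert_self _ _, ?_⟩
  rw [hU, Finset.erase_insert hxU', stdSet_image_unstd]

/-! ### Monotonicity of sections in the pivot -/

lemma secPlus_mono_pt {n k x y : ℕ} {F : Set (Finset ℕ)} (hF : IsFamilyOn n k F)
    (hC : CInc n k F) (hx : x ∈ board n) (hy : y ∈ board n) (hxy : x ≤ y) :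
    secPlus F x ⊆ secPlus F y := by
  rintro T ⟨S, hS, hxS, rfl⟩
  set T := stdSet x (S.erase x) with hT
  have hex : x ∉ S.erase x := Finset.notMem_erase _ _
  have hSx : S.erase x = T.image (unstdElt x) := (stdSet_eq_iff hex).1 rfl
  have hyT : y ∉ T.image (unstdElt y) := by
    simp only [Finset.mem_image]; rintro ⟨a, _, hh⟩; exact unstdElt_ne y a hh
  have hTb : T ⊆ board (n - 1) :=
    stdSet_subset_board (fun a ha => (hF S hS).1 (Finset.mem_of_mem_erase ha)) hx hex
  set U := insert y (T.image (unstdElt y)) with hU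
  have hScard : S.card = k := (hF S hS).2
  have hTcard : T.card = k - 1 := by
    rw [hT, stdSet_card hex, Finset.card_erase_of_mem hxS, hScard]
  have hk1 : 1 ≤ k := by rw [← hScard]; exact Finset.card_pos.2 ⟨x, hxS⟩
  have hUF : U ∈ F := by
    apply hC S U hS
    · intro r hr
      rw [hU, Finset.mem_insert] at hr
      rcases hr with rfl | hr
      · exact hy
      obtain ⟨b, hb, rfl⟩ := Finset.mem_image.1 hr
      exact unstdElt_mem_board hy (hTb hb)
    · rw [hU, Finset.card_insert_of_notMem hyT,
        Finset.card_image_of_injective _ (unstdElt_injective y), hTcard]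
      omega
    · rw [hU, Finset.card_insert_of_notMem hyT,
        Finset.card_image_of_injective _ (unstdElt_injective y), hTcard, hScard]
      omega
    · -- CLE S U, the aggregated inequality
      intro c
      conv_lhs => rw [← Finset.insert_erase hxS]
      rw [cnt_insert hex, cnt_insert hyT, hSx, cnt_image_unstd, cnt_image_unstd]
      rcases le_or_gt c x with h1 | h1
      · have hcy : ¬ y < c := by omega
        have hcx : ¬ x < c := by omega
        simp only [if_neg hcx, if_neg hcy, if_pos h1, if_pos (le_trans h1 hxy)]
        omega
      rcases le_or_gt c y with h2 | h2
      · -- x < c ≤ y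
        have := cnt_pred c T
        simp only [if_pos h1, if_pos h2, if_neg (by omega : ¬ c ≤ x)]
        split_ifs <;> omega
      · simp only [if_pos h1, if_pos (by omega : y < c),
          if_neg (by omega : ¬ c ≤ x), if_neg (by omega : ¬ c ≤ y)]
        omega
  refine ⟨U, hUF, Finset.mem_insert_self _ _, ?_⟩
  rw [hU, Finset.erase_insert hyT, stdSet_image_unstd]

lemma secMinus_anti_pt {n k x y : ℕ} {F : Set (Finset ℕ)} (hF : IsFamilyOn n k F)
    (hC : CInc n k F) (hx : x ∈ board n) (hy : y ∈ board n) (hxy : x ≤ y) :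
    secMinus F y ⊆ secMinus F x := by
  rintro T ⟨S, hS, hyS, rfl⟩
  set T := stdSet y S with hT
  have hSx : S = T.image (unstdElt y) := (stdSet_eq_iff hyS).1 rfl
  have hxT : x ∉ T.image (unstdElt x) := by
    simp only [Finset.mem_image]; rintro ⟨a, _, hh⟩; exact unstdElt_ne x a hh
  have hTb : T ⊆ board (n - 1) := stdSet_subset_board (hF S hS).1 hy hyS
  set U := T.image (unstdElt x) with hU
  have hUF : U ∈ F := by
    apply hC S U hS
    · intro r hr
      obtain ⟨b, hb, rfl⟩ := Finset.mem_image.1 hr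
      exact unstdElt_mem_board hx (hTb hb)
    · rw [hU, Finset.card_image_of_injective _ (unstdElt_injective x), hT,
        stdSet_card hyS, (hF S hS).2]
    · rw [hU, Finset.card_image_of_injective _ (unstdElt_injective x), hSx,
        Finset.card_image_of_injective _ (unstdElt_injective y)]
    · intro c
      rw [hSx, hU, cnt_image_unstd, cnt_image_unstd]
      apply cnt_anti
      split_ifs <;> omega
  exact ⟨U, hUF, hxT, ((stdSet_eq_iff hxT).2 hU ▸ rfl : T = stdSet x U)⟩

/-! ### Commutation of sections -/

lemma unstd_unstd {x y : ℕ} (hxy : x ≠ y) (b : ℕ) :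
    unstdElt x (unstdElt (stdElt x y) b) = unstdElt y (unstdElt (stdElt y x) b) := by
  simp only [unstdElt, stdElt]
  split_ifs <;> omega

lemma stdSet_comm {x y : ℕ} {A : Finset ℕ} (hxy : x ≠ y) (hxA : x ∉ A) (hyA : y ∉ A) :
    stdSet (stdElt x y) (stdSet x A) = stdSet (stdElt y x) (stdSet y A) := by
  have h1 : stdElt x y ∉ stdSet x A := fun h => hyA ((mem_stdSet_self hxA hxy.symm).1 h)
  have h2 : stdElt y x ∉ stdSet y A := fun h => hxA ((mem_stdSet_self hyA hxy).1 h)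
  ext b
  rw [mem_stdSet h1, mem_stdSet h2, mem_stdSet hxA, mem_stdSet hyA, unstd_unstd hxy]

lemma sec_comm_mm {x y : ℕ} {F : Set (Finset ℕ)} (hxy : x ≠ y) :
    secMinus (secMinus F x) (stdElt x y) = secMinus (secMinus F y) (stdElt y x) := by
  ext T
  simp only [mem_secMinus]
  constructor
  · rintro ⟨T₁, ⟨S, hS, hxS, rfl⟩, hy1, rfl⟩
    have hyS : y ∉ S := fun h => hy1 ((mem_stdSet_self hxS hxy.symm).2 h)
    refine ⟨stdSet y S, ⟨S, hS, hyS, rfl⟩, fun h => hxS ((mem_stdSet_self hyS hxy).1 h), ?_⟩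
    exact (stdSet_comm hxy hxS hyS)
  · rintro ⟨T₁, ⟨S, hS, hyS, rfl⟩, hx1, rfl⟩
    have hxS : x ∉ S := fun h => hx1 ((mem_stdSet_self hyS hxy).2 h)
    refine ⟨stdSet x S, ⟨S, hS, hxS, rfl⟩, fun h => hyS ((mem_stdSet_self hxS hxy.symm).1 h), ?_⟩
    exact (stdSet_comm hxy hxS hyS).symm

lemma sec_comm_pp {x y : ℕ} {F : Set (Finset ℕ)} (hxy : x ≠ y) :
    secPlus (secPlus F x) (stdElt x y) = secPlus (secPlus F y) (stdElt y x) := by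
  ext T
  simp only [mem_secPlus]
  constructor
  · rintro ⟨T₁, ⟨S, hS, hxS, rfl⟩, hy1, rfl⟩
    have hex : x ∉ S.erase x := Finset.notMem_erase _ _
    have hyS : y ∈ S := Finset.mem_of_mem_erase ((mem_stdSet_self hex hxy.symm).1 hy1)
    have hey : y ∉ S.erase y := Finset.notMem_erase _ _
    refine ⟨stdSet y (S.erase y), ⟨S, hS, hyS, rfl⟩,
      (mem_stdSet_self hey hxy).2 (Finset.mem_erase.2 ⟨hxy, hxS⟩), ?_⟩
    rw [stdSet_erase hex hxy.symm, stdSet_erase hey hxy]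
    rw [Finset.erase_right_comm]
    exact stdSet_comm hxy (by simp [Finset.mem_erase]) (by simp [Finset.mem_erase])
  · rintro ⟨T₁, ⟨S, hS, hyS, rfl⟩, hx1, rfl⟩
    have hey : y ∉ S.erase y := Finset.notMem_erase _ _
    have hxS : x ∈ S := Finset.mem_of_mem_erase ((mem_stdSet_self hey hxy).1 hx1)
    have hex : x ∉ S.erase x := Finset.notMem_erase _ _
    refine ⟨stdSet x (S.erase x), ⟨S, hS, hxS, rfl⟩,
      (mem_stdSet_self hex hxy.symm).2 (Finset.mem_erase.2 ⟨hxy.symm, hyS⟩), ?_⟩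
    rw [stdSet_erase hex hxy.symm, stdSet_erase hey hxy]
    rw [Finset.erase_right_comm]
    exact (stdSet_comm hxy (by simp [Finset.mem_erase]) (by simp [Finset.mem_erase])).symm

lemma sec_comm_mp {x y : ℕ} {F : Set (Finset ℕ)} (hxy : x ≠ y) :
    secMinus (secPlus F x) (stdElt x y) = secPlus (secMinus F y) (stdElt y x) := by
  ext T
  simp only [mem_secMinus, mem_secPlus]
  constructor
  · rintro ⟨T₁, ⟨S, hS, hxS, rfl⟩, hy1, rfl⟩
    have hex : x ∉ S.erase x := Finset.notMem_erase _ _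
    have hyS : y ∉ S := by
      intro h
      exact hy1 ((mem_stdSet_self hex hxy.symm).2 (Finset.mem_erase.2 ⟨hxy.symm, h⟩))
    refine ⟨stdSet y S, ⟨S, hS, hyS, rfl⟩, (mem_stdSet_self hyS hxy).2 hxS, ?_⟩
    rw [stdSet_erase hyS hxy]
    have : (S.erase x) = (S.erase y).erase x := by
      rw [Finset.erase_eq_of_notMem hyS]
    rw [this] at *
    exact stdSet_comm hxy (by simp [Finset.mem_erase]) (by simp [Finset.mem_erase])
  · rintro ⟨T₁, ⟨S, hS, hyS, rfl⟩, hx1, rfl⟩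
    have hxS : x ∈ S := (mem_stdSet_self hyS hxy).1 hx1
    have hex : x ∉ S.erase x := Finset.notMem_erase _ _
    refine ⟨stdSet x (S.erase x), ⟨S, hS, hxS, rfl⟩, ?_, ?_⟩
    · intro h
      exact hyS (Finset.mem_of_mem_erase ((mem_stdSet_self hex hxy.symm).1 h))
    · rw [stdSet_erase hyS hxy]
      have : (S.erase x) = (S.erase y).erase x := by
        rw [Finset.erase_eq_of_notMem hyS]
      rw [this] at *
      exact (stdSet_comm hxy (by simp [Finset.mem_erase]) (by simp [Finset.mem_erase])).symm

/-! ### Game basics -/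

lemma aliceWins_iff {n k : ℕ} {F : Set (Finset ℕ)} (h : ¬(k = 0 ∨ n ≤ k)) :
    AliceWins n k F ↔ ∃ x ∈ board n,
      BobWins (n - 1) (k - 1) (secPlus F x) ∧ BobWins (n - 1) k (secMinus F x) := by
  rw [AliceWins]; simp [h]

lemma bobWins_iff {n k : ℕ} {F : Set (Finset ℕ)} (h : ¬(k = 0 ∨ n ≤ k)) :
    BobWins n k F ↔ ∀ x ∈ board n,
      AliceWins (n - 1) (k - 1) (secPlus F x) ∨ AliceWins (n - 1) k (secMinus F x) := by
  rw [BobWins]; simp [h]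

lemma aliceWins_term {n k : ℕ} {F : Set (Finset ℕ)} (h : k = 0 ∨ n ≤ k) :
    AliceWins n k F ↔ F.Nonempty := by
  rw [AliceWins]; simp [h]

lemma bobWins_term {n k : ℕ} {F : Set (Finset ℕ)} (h : k = 0 ∨ n ≤ k) :
    BobWins n k F ↔ F.Nonempty := by
  rw [BobWins]; simp [h]

lemma secPlus_mono_fam {F G : Set (Finset ℕ)} (h : F ⊆ G) (x : ℕ) :
    secPlus F x ⊆ secPlus G x := by
  rintro T ⟨S, hS, hx, rfl⟩; exact ⟨S, h hS, hx, rfl⟩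

lemma secMinus_mono_fam {F G : Set (Finset ℕ)} (h : F ⊆ G) (x : ℕ) :
    secMinus F x ⊆ secMinus G x := by
  rintro T ⟨S, hS, hx, rfl⟩; exact ⟨S, h hS, hx, rfl⟩

lemma wins_mono : ∀ n k (F G : Set (Finset ℕ)), F ⊆ G →
    (AliceWins n k F → AliceWins n k G) ∧ (BobWins n k F → BobWins n k G) := by
  intro n
  induction n using Nat.strong_induction_on with
  | _ n ih =>
    intro k F G hFG
    by_cases h : k = 0 ∨ n ≤ k
    · rw [aliceWins_term h, aliceWins_term h, bobWins_term h, bobWins_term h]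
      exact ⟨Set.Nonempty.mono hFG, Set.Nonempty.mono hFG⟩
    have hn : n - 1 < n := by omega
    constructor
    · rw [aliceWins_iff h, aliceWins_iff h]
      rintro ⟨x, hx, h1, h2⟩
      exact ⟨x, hx, (ih _ hn _ _ _ (secPlus_mono_fam hFG x)).2 h1,
        (ih _ hn _ _ _ (secMinus_mono_fam hFG x)).2 h2⟩
    · rw [bobWins_iff h, bobWins_iff h]
      intro hB x hx
      rcases hB x hx with h1 | h1
      · exact Or.inl ((ih _ hn _ _ _ (secPlus_mono_fam hFG x)).1 h1)
      · exact Or.inr ((ih _ hn _ _ _ (secMinus_mono_fam hFG x)).1 h1)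

lemma aliceWins_mono {n k : ℕ} {F G : Set (Finset ℕ)} (h : F ⊆ G) :
    AliceWins n k F → AliceWins n k G := (wins_mono n k F G h).1

lemma bobWins_mono {n k : ℕ} {F G : Set (Finset ℕ)} (h : F ⊆ G) :
    BobWins n k F → BobWins n k G := (wins_mono n k F G h).2

/-! ### Extraction lemmas for k = 1 and k = n-1 -/

lemma board_card (N : ℕ) : (board N).card = N := by
  simp [board, Nat.card_Icc]

lemma stdElt_mem_board {N y r : ℕ} (hr : r ∈ board N) (hy : y ∈ board N) (hne : r ≠ y) :
    stdElt y r ∈ board (N - 1) := by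
  rw [mem_board] at *
  simp only [stdElt]
  split_ifs <;> omega

lemma singleton_of_mem_plus {N y : ℕ} {H : Set (Finset ℕ)} (hfam : IsFamilyOn N 1 H)
    {T : Finset ℕ} (hT : T ∈ secPlus H y) : {y} ∈ H := by
  obtain ⟨S, hS, hyS, -⟩ := hT
  obtain ⟨a, ha⟩ := Finset.card_eq_one.1 (hfam S hS).2
  rw [ha] at hyS hS
  rw [Finset.mem_singleton] at hyS
  rw [hyS]
  exact hS

lemma singleton_of_mem_minus {y : ℕ} {H : Set (Finset ℕ)}
    {s' : ℕ} (hT : {s'} ∈ secMinus H y) : {unstdElt y s'} ∈ H := by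
  obtain ⟨S, hS, hyS, heq⟩ := hT
  have := (stdSet_eq_iff hyS).1 heq
  rw [Finset.image_singleton] at this
  rwa [← this]

lemma coSingleton_of_mem_minus {N y : ℕ} {H : Set (Finset ℕ)} (hfam : IsFamilyOn N (N - 1) H)
    (hy : y ∈ board N) {T : Finset ℕ} (hT : T ∈ secMinus H y) : (board N).erase y ∈ H := by
  obtain ⟨S, hS, hyS, -⟩ := hT
  obtain ⟨hSb, hSc⟩ := hfam S hS
  have hsub : S ⊆ (board N).erase y := by
    intro a ha
    exact Finset.mem_erase.2 ⟨fun h => hyS (h ▸ ha), hSb ha⟩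
  have : S = (board N).erase y := by
    apply Finset.eq_of_subset_of_card_le hsub
    rw [Finset.card_erase_of_mem hy, board_card, hSc]
  rwa [← this]

lemma insert_image_board_erase {N y t' : ℕ} (hy : y ∈ board N) (ht' : t' ∈ board (N - 1)) :
    insert y (((board (N - 1)).erase t').image (unstdElt y)) = (board N).erase (unstdElt y t') := by
  ext r
  simp only [Finset.mem_insert, Finset.mem_image, Finset.mem_erase]
  constructor
  · rintro (rfl | ⟨b, ⟨hbt, hb⟩, rfl⟩)
    · exact ⟨fun h => unstdElt_ne _ t' h.symm, hy⟩
    · exact ⟨fun h => hbt (unstdElt_injective y h), unstdElt_mem_board hy hb⟩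
  · rintro ⟨hne, hr⟩
    by_cases hry : r = y
    · exact Or.inl hry
    · refine Or.inr ⟨stdElt y r, ⟨?_, stdElt_mem_board hr hy hry⟩, unstdElt_stdElt hry⟩
      intro h
      exact hne (by rw [← h, unstdElt_stdElt hry])

lemma coSingleton_of_mem_plus {N y t' : ℕ} {H : Set (Finset ℕ)} (hy : y ∈ board N)
    (ht' : t' ∈ board (N - 1)) (hT : (board (N - 1)).erase t' ∈ secPlus H y) :
    (board N).erase (unstdElt y t') ∈ H := by
  obtain ⟨S, hS, hyS, heq⟩ := hT
  have h1 : S.erase y = ((board (N - 1)).erase t').image (unstdElt y) :=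
    (stdSet_eq_iff (Finset.notMem_erase _ _)).1 heq
  have h2 : S = insert y (S.erase y) := (Finset.insert_erase hyS).symm
  rw [h2, h1, insert_image_board_erase hy ht'] at hS
  exact hS

lemma Klemmas : ∀ N, 1 ≤ N → ∀ H : Set (Finset ℕ),
    (IsFamilyOn N 1 H → BobWins N 1 H →
      ∃ s, s ∈ board N ∧ {s} ∈ H ∧ s ≤ N / 2 + 1) ∧
    (IsFamilyOn N 1 H → AliceWins N 1 H →
      ∃ s, s ∈ board N ∧ {s} ∈ H ∧ s ≤ (N - 1) / 2 + 1) ∧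
    (IsFamilyOn N (N - 1) H → BobWins N (N - 1) H →
      ∃ t, t ∈ board N ∧ (board N).erase t ∈ H ∧ (N + 1) / 2 ≤ t) ∧
    (IsFamilyOn N (N - 1) H → AliceWins N (N - 1) H →
      ∃ t, t ∈ board N ∧ (board N).erase t ∈ H ∧ N / 2 + 1 ≤ t) := by
  intro N
  induction N using Nat.strong_induction_on with
  | _ N ih =>
  intro hN H
  rcases Nat.lt_or_ge N 2 with hN2 | hN2
  · -- base case N = 1
    have hN1 : N = 1 := by omega
    subst hN1
    have hb1 : board 1 = {1} := by rw [show (1:ℕ) = 0 + 1 from rfl]; rfl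
    have hsing : ∀ S : Finset ℕ, S ⊆ board 1 → S.card = 1 → S = {1} := by
      intro S hSb hSc
      apply Finset.eq_of_subset_of_card_le (hb1 ▸ hSb)
      rw [hSc, Finset.card_singleton]
    refine ⟨fun hfam hB => ?_, fun hfam hA => ?_, fun hfam hB => ?_, fun hfam hA => ?_⟩
    · obtain ⟨S, hS⟩ := (bobWins_term (by omega)).1 hB
      exact ⟨1, by rw [hb1]; exact Finset.mem_singleton_self 1,
        by rw [← hsing S ((hfam S hS).1) ((hfam S hS).2)]; exact hS, by omega⟩
    · obtain ⟨S, hS⟩ := (aliceWins_term (by omega)).1 hA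
      exact ⟨1, by rw [hb1]; exact Finset.mem_singleton_self 1,
        by rw [← hsing S ((hfam S hS).1) ((hfam S hS).2)]; exact hS, by omega⟩
    · obtain ⟨S, hS⟩ := (bobWins_term (by simp)).1 hB
      have hS0 : S = ∅ := Finset.card_eq_zero.1 ((hfam S hS).2)
      refine ⟨1, by rw [hb1]; exact Finset.mem_singleton_self 1, ?_, by omega⟩
      rw [hb1, Finset.erase_singleton, ← hS0]
      exact hS
    · obtain ⟨S, hS⟩ := (aliceWins_term (by simp)).1 hA
      have hS0 : S = ∅ := Finset.card_eq_zero.1 ((hfam S hS).2)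
      refine ⟨1, by rw [hb1]; exact Finset.mem_singleton_self 1, ?_, by omega⟩
      rw [hb1, Finset.erase_singleton, ← hS0]
      exact hS
  -- inductive case N ≥ 2
  have hNN : N - 1 < N := by omega
  have hN1' : 1 ≤ N - 1 := by omega
  refine ⟨fun hfam hB => ?_, fun hfam hA => ?_, fun hfam hB => ?_, fun hfam hA => ?_⟩
  · -- KB1
    set x := N / 2 + 1 with hx
    have hxb : x ∈ board N := by rw [mem_board]; omega
    rcases (bobWins_iff (by omega)).1 hB x hxb with h1 | h1
    · obtain ⟨T, hT⟩ := (aliceWins_term (by simp)).1 h1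
      exact ⟨x, hxb, singleton_of_mem_plus hfam hT, le_refl _⟩
    · obtain ⟨s', hs'b, hs'H, hs'le⟩ :=
        (ih _ hNN hN1' (secMinus H x)).2.1 (secMinus_family hfam hxb) h1
      have hlt : s' < x := by
        rw [mem_board] at hs'b
        omega
      refine ⟨s', by rw [mem_board] at *; omega, ?_, by omega⟩
      have := singleton_of_mem_minus hs'H
      rwa [show unstdElt x s' = s' by simp [unstdElt, hlt]] at this
  · -- KA1
    obtain ⟨y, hyb, hBp, hBm⟩ := (aliceWins_iff (by omega)).1 hA
    obtain ⟨T, hT⟩ := (bobWins_term (by simp)).1 hBp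
    have hyH : {y} ∈ H := singleton_of_mem_plus hfam hT
    obtain ⟨s', hs'b, hs'H, hs'le⟩ :=
      (ih _ hNN hN1' (secMinus H y)).1 (secMinus_family hfam hyb) hBm
    rcases Nat.lt_or_ge ((N - 1) / 2 + 1) y with hy2 | hy2
    swap
    · exact ⟨y, hyb, hyH, hy2⟩
    · have hlt : s' < y := by omega
      refine ⟨s', by rw [mem_board] at *; omega, ?_, by omega⟩
      have := singleton_of_mem_minus hs'H
      rwa [show unstdElt y s' = s' by simp [unstdElt, hlt]] at this
  · -- KB'
    set x := (N + 1) / 2 with hx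
    have hxb : x ∈ board N := by rw [mem_board]; omega
    rcases (bobWins_iff (by omega)).1 hB x hxb with h1 | h1
    · obtain ⟨t', ht'b, ht'H, ht'le⟩ :=
        (ih _ hNN hN1' (secPlus H x)).2.2.2
          (by have := secPlus_family hfam hxb; rwa [show N - 1 - 1 = (N-1) - 1 from rfl] at this)
          h1
      refine ⟨unstdElt x t', unstdElt_mem_board hxb ht'b,
        coSingleton_of_mem_plus hxb ht'b ht'H, ?_⟩
      have : t' ≤ unstdElt x t' := by simp only [unstdElt]; split_ifs <;> omega
      omega
    · obtain ⟨T, hT⟩ := (aliceWins_term (by right; omega)).1 h1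
      exact ⟨x, hxb, coSingleton_of_mem_minus hfam hxb hT, le_refl _⟩
  · -- KA'
    obtain ⟨y, hyb, hBp, hBm⟩ := (aliceWins_iff (by omega)).1 hA
    obtain ⟨T, hT⟩ := (bobWins_term (by right; omega)).1 hBm
    have hyH : (board N).erase y ∈ H := coSingleton_of_mem_minus hfam hyb hT
    rcases Nat.lt_or_ge y (N / 2 + 1) with hy2 | hy2
    swap
    · exact ⟨y, hyb, hyH, hy2⟩
    · obtain ⟨t', ht'b, ht'H, ht'le⟩ :=
        (ih _ hNN hN1' (secPlus H y)).2.2.1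
          (by have := secPlus_family hfam hyb; rwa [show N - 1 - 1 = (N-1) - 1 from rfl] at this)
          hBp
      refine ⟨unstdElt y t', unstdElt_mem_board hyb ht'b,
        coSingleton_of_mem_plus hyb ht'b ht'H, ?_⟩
      have hyt : ¬ t' < y := by omega
      simp only [unstdElt, if_neg hyt]
      omega

/-! ### The main induction -/

lemma stdElt_le (a b : ℕ) : stdElt a b ≤ b := by
  simp only [stdElt]; split_ifs <;> omega

lemma stdElt_ge (a b : ℕ) : b - 1 ≤ stdElt a b := by
  simp only [stdElt]; split_ifs <;> omega

lemma cle_singleton {s x : ℕ} (h : s ≤ x) : CLE {s} {x} := by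
  intro c; rw [cnt_singleton, cnt_singleton]; split_ifs <;> omega

lemma cle_erase_board {N t x : ℕ} (ht : t ∈ board N) (hx : x ∈ board N) (hxt : x ≤ t) :
    CLE ((board N).erase t) ((board N).erase x) := by
  intro c
  have h1 := cnt_erase ht c
  have h2 := cnt_erase hx c
  split_ifs at h1 h2 <;> omega

lemma stdSet_empty (x : ℕ) : stdSet x ∅ = ∅ := by simp [stdSet]

lemma eq_board_erase {N z : ℕ} {S : Finset ℕ} (hz : z ∈ board N) (hS : S ⊆ board N)
    (hzS : z ∉ S) (hcard : S.card = N - 1) : S = (board N).erase z := by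
  apply Finset.eq_of_subset_of_card_le
  · intro a ha
    exact Finset.mem_erase.2 ⟨fun h => hzS (h ▸ ha), hS ha⟩
  · rw [Finset.card_erase_of_mem hz, board_card, hcard]

/-- The odd-board statement `SO(m)`. -/
def SOstmt (m : ℕ) : Prop := ∀ k F, 0 < k → k < 2*m+1 → IsFamilyOn (2*m+1) k F →
  CInc (2*m+1) k F → BobWins (2*m+1) k F →
  (∀ x, x ∈ board (2*m+1) → x ≤ m+1 → BobWins (2*m) k (secMinus F x)) ∧
  (∀ x, x ∈ board (2*m+1) → m+1 ≤ x → BobWins (2*m) (k-1) (secPlus F x))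

/-- The even-board statement `SE(m)`. -/
def SEstmt (m : ℕ) : Prop := ∀ k G, 0 < k → k < 2*m → IsFamilyOn (2*m) k G →
  CInc (2*m) k G → AliceWins (2*m) k G →
  (∀ x, x ∈ board (2*m) → x ≤ m+1 → AliceWins (2*m-1) k (secMinus G x)) ∧
  (∀ x, x ∈ board (2*m) → m ≤ x → AliceWins (2*m-1) (k-1) (secPlus G x))

lemma SO_of (m : ℕ) (hm : 1 ≤ m) (hSE : SEstmt m) : SOstmt m := by
  intro k F hk hkn hfam hcinc hB
  have hn1 : (2*m+1) - 1 = 2*m := by omega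
  constructor
  · -- part (a): minus sections at x ≤ m+1
    intro x hxb hxle
    rcases Nat.lt_or_ge k (2*m) with hk2m | hk2m
    swap
    · -- k = 2m : terminal target
      have hk2m' : k = 2*m := by omega
      rw [bobWins_term (by right; omega)]
      obtain ⟨t, htb, htF, htge⟩ := (Klemmas (2*m+1) (by omega) F).2.2.1
        (by rwa [show (2*m+1) - 1 = k by omega]) (by rwa [show (2*m+1) - 1 = k by omega])
      have hxF : (board (2*m+1)).erase x ∈ F := by
        apply hcinc _ _ htF (Finset.erase_subset _ _)
        · rw [Finset.card_erase_of_mem hxb, board_card]; omega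
        · rw [Finset.card_erase_of_mem hxb, Finset.card_erase_of_mem htb]
        · exact cle_erase_board htb hxb (by omega)
      exact ⟨stdSet x ((board (2*m+1)).erase x),
        ⟨_, hxF, Finset.notMem_erase _ _, rfl⟩⟩
    · -- k < 2m
      rw [bobWins_iff (by omega)]
      intro z hzb
      set z' := unstdElt x z with hz'
      have hzb' : z ∈ board ((2*m+1) - 1) := by rwa [hn1]
      have hz'b : z' ∈ board (2*m+1) := unstdElt_mem_board hxb hzb'
      have hz'x : z' ≠ x := unstdElt_ne x z
      have hzz : stdElt x z' = z := stdElt_unstdElt x z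
      have hx'' : stdElt z' x ∈ board (2*m) := by
        have := stdElt_mem_board hxb hz'b (Ne.symm hz'x)
        rwa [hn1] at this
      have hx''le : stdElt z' x ≤ m + 1 := le_trans (stdElt_le _ _) hxle
      rcases (bobWins_iff (by omega)).1 hB z' hz'b with hA1 | hA1
      · -- Alice wins F⁺_{z'} : left disjunct
        left
        have hcm : secPlus (secMinus F x) z = secMinus (secPlus F z') (stdElt z' x) := by
          rw [← hzz]; exact (sec_comm_mp hz'x).symm
        rw [hcm]
        rw [hn1] at hA1
        rcases Nat.lt_or_ge k 2 with hk1 | hk1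
        · -- k = 1 : inner terminal
          have hk1' : k = 1 := by omega
          rw [aliceWins_term (by left; omega)] at hA1 ⊢
          obtain ⟨T, hT⟩ := hA1
          have hfamP : IsFamilyOn (2*m) (k-1) (secPlus F z') := by
            have := secPlus_family hfam hz'b; rwa [hn1] at this
          have hT0 : T = ∅ := Finset.card_eq_zero.1 (by rw [(hfamP T hT).2]; omega)
          exact ⟨∅, ⟨T, hT, by simp [hT0], by simp [hT0, stdSet_empty]⟩⟩
        · -- k ≥ 2 : use SE(m)(a) on F⁺_{z'}
          have hres := (hSE (k-1) (secPlus F z') (by omega) (by omega)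
            (by have := secPlus_family hfam hz'b; rwa [hn1] at this)
            (by have := secPlus_cinc hfam hcinc hz'b; rwa [hn1] at this) hA1).1
            (stdElt z' x) hx'' hx''le
          rwa [show 2*m-1 = (2*m+1-1) - 1 by omega] at hres
      · -- Alice wins F⁻_{z'} : right disjunct
        right
        have hcm : secMinus (secMinus F x) z = secMinus (secMinus F z') (stdElt z' x) := by
          rw [← hzz]; exact sec_comm_mm (Ne.symm hz'x)
        rw [hcm]
        rw [hn1] at hA1
        have hres := (hSE k (secMinus F z') hk (by omega)
          (by have := secMinus_family hfam hz'b; rwa [hn1] at this)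
          (by have := secMinus_cinc hfam hcinc hz'b; rwa [hn1] at this) hA1).1
          (stdElt z' x) hx'' hx''le
        rwa [show 2*m-1 = (2*m+1-1) - 1 by omega] at hres
  · -- part (b): plus sections at x ≥ m+1
    intro x hxb hxge
    rcases Nat.lt_or_ge k 2 with hk1 | hk1
    · -- k = 1 : terminal target
      have hk1' : k = 1 := by omega
      rw [bobWins_term (by left; omega)]
      obtain ⟨s, hsb, hsF, hsle⟩ := (Klemmas (2*m+1) (by omega) F).1
        (by rwa [hk1'] at hfam) (by rwa [hk1'] at hB)
      rw [show (2*m+1)/2 = m by omega] at hsle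
      have hxF : {x} ∈ F := by
        apply hcinc _ _ hsF (by intro a ha; rw [Finset.mem_singleton] at ha; rwa [ha])
        · rw [Finset.card_singleton]; omega
        · rw [Finset.card_singleton, Finset.card_singleton]
        · exact cle_singleton (by omega)
      exact ⟨∅, ⟨{x}, hxF, Finset.mem_singleton_self x,
        by rw [Finset.erase_singleton, stdSet_empty]⟩⟩
    · -- k ≥ 2
      rw [bobWins_iff (by omega)]
      intro z hzb
      set z' := unstdElt x z with hz'
      have hzb' : z ∈ board ((2*m+1) - 1) := by rwa [hn1]
      have hz'b : z' ∈ board (2*m+1) := unstdElt_mem_board hxb hzb'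
      have hz'x : z' ≠ x := unstdElt_ne x z
      have hzz : stdElt x z' = z := stdElt_unstdElt x z
      have hx'' : stdElt z' x ∈ board (2*m) := by
        have := stdElt_mem_board hxb hz'b (Ne.symm hz'x)
        rwa [hn1] at this
      have hx''ge : m ≤ stdElt z' x := le_trans (by omega) (stdElt_ge z' x)
      rcases (bobWins_iff (by omega)).1 hB z' hz'b with hA1 | hA1
      · -- Alice wins F⁺_{z'} : left disjunct
        left
        have hcm : secPlus (secPlus F x) z = secPlus (secPlus F z') (stdElt z' x) := by
          rw [← hzz]; exact sec_comm_pp (Ne.symm hz'x)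
        rw [hcm]
        rw [hn1] at hA1
        have hres := (hSE (k-1) (secPlus F z') (by omega) (by omega)
          (by have := secPlus_family hfam hz'b; rwa [hn1] at this)
          (by have := secPlus_cinc hfam hcinc hz'b; rwa [hn1] at this) hA1).2
          (stdElt z' x) hx'' hx''ge
        rwa [show 2*m-1 = (2*m+1-1) - 1 by omega] at hres
      · -- Alice wins F⁻_{z'} : right disjunct
        right
        have hcm : secMinus (secPlus F x) z = secPlus (secMinus F z') (stdElt z' x) := by
          rw [← hzz]; exact sec_comm_mp (Ne.symm hz'x)
        rw [hcm]
        rw [hn1] at hA1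
        rcases Nat.lt_or_ge k (2*m) with hk2m | hk2m
        · -- k < 2m : use SE(m)(b) on F⁻_{z'}
          have hres := (hSE k (secMinus F z') hk hk2m
            (by have := secMinus_family hfam hz'b; rwa [hn1] at this)
            (by have := secMinus_cinc hfam hcinc hz'b; rwa [hn1] at this) hA1).2
            (stdElt z' x) hx'' hx''ge
          rwa [show 2*m-1 = (2*m+1-1) - 1 by omega] at hres
        · -- k = 2m : inner terminal
          have hk2m' : k = 2*m := by omega
          rw [aliceWins_term (by right; omega)] at hA1
          rw [aliceWins_term (by right; omega)]
          obtain ⟨T, ⟨S, hS, hz'S, rfl⟩⟩ := hA1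
          have hSb := (hfam S hS).1
          have hSe : S = (board (2*m+1)).erase z' :=
            eq_board_erase hz'b hSb hz'S (by rw [(hfam S hS).2]; omega)
          have hxS : x ∈ S := by
            rw [hSe]
            exact Finset.mem_erase.2 ⟨Ne.symm hz'x, hxb⟩
          have hxT : stdElt z' x ∈ stdSet z' S := (mem_stdSet_self hz'S (Ne.symm hz'x)).2 hxS
          exact ⟨_, ⟨stdSet z' S, ⟨S, hS, hz'S, rfl⟩, hxT, rfl⟩⟩

lemma SE_of (m : ℕ) (hm : 1 ≤ m) (hSO : SOstmt (m-1)) : SEstmt m := by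
  intro k G hk hkn hfam hcinc hA
  have e1 : 2*m-1 = 2*(m-1)+1 := by omega
  -- helper: on the odd board [2m-1], Bob's win gives Alice a win by opening at the centre m
  have witnessM : ∀ (k' : ℕ) (H : Set (Finset ℕ)), 0 < k' → k' < 2*m-1 →
      IsFamilyOn (2*m-1) k' H → CInc (2*m-1) k' H → BobWins (2*m-1) k' H →
      AliceWins (2*m-1) k' H := by
    intro k' H hk' hk'n hfamH hcincH hBH
    rw [e1] at hfamH hcincH hBH
    have hres := hSO k' H hk' (by omega) hfamH hcincH hBH
    rw [aliceWins_iff (by omega)]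
    refine ⟨m, by rw [mem_board]; omega, ?_, ?_⟩
    · have := hres.2 m (by rw [mem_board]; omega) (by omega)
      rwa [show 2*(m-1) = (2*m-1)-1 by omega] at this
    · have := hres.1 m (by rw [mem_board]; omega) (by omega)
      rwa [show 2*(m-1) = (2*m-1)-1 by omega] at this
  obtain ⟨y, hyb, hBp, hBm⟩ := (aliceWins_iff (by omega)).1 hA
  constructor
  · -- part (a): minus sections at x ≤ m+1
    intro x hxb hxle
    rcases Nat.lt_or_ge k (2*m-1) with hksm | hksm
    swap
    · -- k = 2m-1 : terminal target
      have hk' : k = 2*m-1 := by omega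
      rw [aliceWins_term (by right; omega)]
      obtain ⟨t, htb, htG, htge⟩ := (Klemmas (2*m) (by omega) G).2.2.2
        (by rwa [show (2*m) - 1 = k by omega]) (by rwa [show (2*m) - 1 = k by omega])
      have hxG : (board (2*m)).erase x ∈ G := by
        apply hcinc _ _ htG (Finset.erase_subset _ _)
        · rw [Finset.card_erase_of_mem hxb, board_card]; omega
        · rw [Finset.card_erase_of_mem hxb, Finset.card_erase_of_mem htb]
        · exact cle_erase_board htb hxb (by omega)
      exact ⟨_, ⟨_, hxG, Finset.notMem_erase _ _, rfl⟩⟩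
    · -- k < 2m-1
      by_cases hxy : x = y
      · subst hxy
        exact witnessM k (secMinus G x) hk hksm (secMinus_family hfam hxb)
          (secMinus_cinc hfam hcinc hxb) hBm
      · by_cases hbad : x = m+1 ∧ m+1 < y
        · have hxley : x ≤ y := by omega
          have hBx : BobWins (2*m-1) k (secMinus G x) :=
            bobWins_mono (secMinus_anti_pt hfam hcinc hxb hyb hxley) hBm
          exact witnessM k (secMinus G x) hk hksm (secMinus_family hfam hxb)
            (secMinus_cinc hfam hcinc hxb) hBx
        · -- good case: open at stdElt x y
          have hyx : y ≠ x := fun h => hxy h.symm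
          have hx''le : stdElt y x ≤ m := by
            simp only [stdElt]
            split_ifs with h <;> [skip; omega]
            -- here x < y ; if x = m+1 then m+1 < y, contradicting ¬hbad
            rcases Nat.lt_or_ge x (m+1) with h2 | h2
            · omega
            · exfalso; exact hbad ⟨by omega, by omega⟩
          have hx''b : stdElt y x ∈ board (2*m-1) := stdElt_mem_board hxb hyb hxy
          rw [aliceWins_iff (by omega)]
          refine ⟨stdElt x y, stdElt_mem_board hyb hxb hyx, ?_, ?_⟩
          · -- plus branch
            have hcm : secPlus (secMinus G x) (stdElt x y) =
                secMinus (secPlus G y) (stdElt y x) := (sec_comm_mp hyx).symm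
            rw [hcm]
            rcases Nat.lt_or_ge k 2 with hk1 | hk1
            · -- k = 1 : terminal
              rw [bobWins_term (by left; omega)]
              rw [bobWins_term (by left; omega)] at hBp
              obtain ⟨T, hT⟩ := hBp
              have hfamP : IsFamilyOn ((2*m)-1) (k-1) (secPlus G y) := secPlus_family hfam hyb
              have hT0 : T = ∅ := Finset.card_eq_zero.1 (by rw [(hfamP T hT).2]; omega)
              exact ⟨∅, ⟨T, hT, by simp [hT0], by simp [hT0, stdSet_empty]⟩⟩
            · -- k ≥ 2 : use SO(m-1) part (a) on G⁺_y
              have hfamP := secPlus_family hfam hyb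
              have hcincP := secPlus_cinc hfam hcinc hyb
              rw [show (2*m) - 1 = 2*(m-1)+1 by omega] at hfamP hcincP hBp
              have hres := (hSO (k-1) (secPlus G y) (by omega) (by omega) hfamP hcincP hBp).1
                (stdElt y x) (by rwa [← e1]) (by omega)
              rwa [show 2*(m-1) = (2*m-1)-1 by omega] at hres
          · -- minus branch
            have hcm : secMinus (secMinus G x) (stdElt x y) =
                secMinus (secMinus G y) (stdElt y x) := sec_comm_mm hxy
            rw [hcm]
            have hfamM := secMinus_family hfam hyb
            have hcincM := secMinus_cinc hfam hcinc hyb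
            rw [show (2*m) - 1 = 2*(m-1)+1 by omega] at hfamM hcincM hBm
            have hres := (hSO k (secMinus G y) hk (by omega) hfamM hcincM hBm).1
              (stdElt y x) (by rwa [← e1]) (by omega)
            rwa [show 2*(m-1) = (2*m-1)-1 by omega] at hres
  · -- part (b): plus sections at x ≥ m
    intro x hxb hxge
    rcases Nat.lt_or_ge k 2 with hk1 | hk1
    · -- k = 1 : terminal target
      have hk1' : k = 1 := by omega
      rw [aliceWins_term (by left; omega)]
      obtain ⟨s, hsb, hsG, hsle⟩ := (Klemmas (2*m) (by omega) G).2.1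
        (by rwa [hk1'] at hfam) (by rwa [hk1'] at hA)
      have hxG : {x} ∈ G := by
        apply hcinc _ _ hsG (by intro a ha; rw [Finset.mem_singleton] at ha; rwa [ha])
        · rw [Finset.card_singleton]; omega
        · rw [Finset.card_singleton, Finset.card_singleton]
        · exact cle_singleton (by omega)
      exact ⟨∅, ⟨{x}, hxG, Finset.mem_singleton_self x,
        by rw [Finset.erase_singleton, stdSet_empty]⟩⟩
    · -- k ≥ 2
      by_cases hxy : x = y
      · subst hxy
        exact witnessM (k-1) (secPlus G x) (by omega) (by omega)
          (secPlus_family hfam hxb) (secPlus_cinc hfam hcinc hxb) hBp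
      · by_cases hbad : x = m ∧ y < m
        · have hylex : y ≤ x := by omega
          have hBx : BobWins (2*m-1) (k-1) (secPlus G x) :=
            bobWins_mono (secPlus_mono_pt hfam hcinc hyb hxb hylex) hBp
          exact witnessM (k-1) (secPlus G x) (by omega) (by omega)
            (secPlus_family hfam hxb) (secPlus_cinc hfam hcinc hxb) hBx
        · -- good case
          have hyx : y ≠ x := fun h => hxy h.symm
          have hx''ge : m ≤ stdElt y x := by
            simp only [stdElt]
            split_ifs with h
            · -- x < y : stdElt = x ≥ m
              omega
            · -- y < x : stdElt = x - 1 ; need x ≥ m+1, i.e. ¬(x = m ∧ y < m)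
              rcases Nat.lt_or_ge m x with h2 | h2
              · omega
              · exfalso; exact hbad ⟨by omega, by omega⟩
          have hx''b : stdElt y x ∈ board (2*m-1) := stdElt_mem_board hxb hyb hxy
          rw [aliceWins_iff (by omega)]
          refine ⟨stdElt x y, stdElt_mem_board hyb hxb hyx, ?_, ?_⟩
          · -- plus branch
            have hcm : secPlus (secPlus G x) (stdElt x y) =
                secPlus (secPlus G y) (stdElt y x) := sec_comm_pp hxy
            rw [hcm]
            have hfamP := secPlus_family hfam hyb
            have hcincP := secPlus_cinc hfam hcinc hyb
            rw [show (2*m) - 1 = 2*(m-1)+1 by omega] at hfamP hcincP hBp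
            have hres := (hSO (k-1) (secPlus G y) (by omega) (by omega) hfamP hcincP hBp).2
              (stdElt y x) (by rwa [← e1]) (by omega)
            rwa [show 2*(m-1) = (2*m-1)-1 by omega] at hres
          · -- minus branch
            have hcm : secMinus (secPlus G x) (stdElt x y) =
                secPlus (secMinus G y) (stdElt y x) := sec_comm_mp hxy
            rw [hcm]
            rcases Nat.lt_or_ge k (2*m-1) with hksm | hksm
            · -- k < 2m-1 : use SO(m-1) part (b) on G⁻_y
              have hfamM := secMinus_family hfam hyb
              have hcincM := secMinus_cinc hfam hcinc hyb
              rw [show (2*m) - 1 = 2*(m-1)+1 by omega] at hfamM hcincM hBm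
              have hres := (hSO k (secMinus G y) hk (by omega) hfamM hcincM hBm).2
                (stdElt y x) (by rwa [← e1]) (by omega)
              rwa [show 2*(m-1) = (2*m-1)-1 by omega] at hres
            · -- k = 2m-1 : terminal
              have hk' : k = 2*m-1 := by omega
              rw [bobWins_term (by right; omega)]
              rw [bobWins_term (by right; omega)] at hBm
              obtain ⟨T, ⟨S, hS, hyS, rfl⟩⟩ := hBm
              have hSb := (hfam S hS).1
              have hSe : S = (board (2*m)).erase y :=
                eq_board_erase hyb hSb hyS (by rw [(hfam S hS).2]; omega)
              have hxS : x ∈ S := by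
                rw [hSe]; exact Finset.mem_erase.2 ⟨hxy, hxb⟩
              have hxT : stdElt y x ∈ stdSet y S := (mem_stdSet_self hyS hxy).2 hxS
              exact ⟨_, ⟨stdSet y S, ⟨S, hS, hyS, rfl⟩, hxT, rfl⟩⟩

lemma SO_all : ∀ m, SOstmt m := by
  intro m
  induction m with
  | zero => intro k F hk hkn; omega
  | succ m ih =>
      exact SO_of (m+1) (by omega) (SE_of (m+1) (by omega) (by simpa using ih))

lemma cinc_of_increasing {n k : ℕ} {F : Set (Finset ℕ)} (h : IsIncreasingFamily n k F) :
    CInc n k F := by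
  intro S T hS hTb hTc hcard hcle
  exact h S T hS hTb hTc (pointwiseLE_of_cle hcard hcle)

/-- on an odd board `[2m+1]`, if Bob wins his `F`-game for an
increasing family `F`, then Bob wins both his games on the sections at the
middle element `m+1`; equivalently, Alice wins her `F`-game by opening with
the middle element. -/
theorem central_move_odd (m k : ℕ) (hm : 1 ≤ m) (hk : 0 < k) (hkn : k < 2 * m + 1)
    (F : Set (Finset ℕ)) (hF : IsFamilyOn (2 * m + 1) k F)
    (hinc : IsIncreasingFamily (2 * m + 1) k F)
    (hB : BobWins (2 * m + 1) k F) :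
    BobWins (2 * m) (k - 1) (secPlus F (m + 1)) ∧
      BobWins (2 * m) k (secMinus F (m + 1)) := by
  have hres := SO_all m k F hk (by omega) hF (cinc_of_increasing hinc) hB
  have hc : m + 1 ∈ board (2*m+1) := by rw [mem_board]; omega
  exact ⟨hres.2 (m+1) hc (le_refl _), hres.1 (m+1) hc (le_refl _)⟩
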